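/- Let (X,d,μ) be a space of homogeneous type and d̃ an equivalent quasi-distance with open balls, c₁d ≤ d̃ ≤ c₂d. If E ⊆ X is (σ,γ)-weakly porous with respect to d and ρ_{d,E} is doubling (with constant C_{d,E}), then E is (σ₀,γ₀)-weakly porous with respect to d̃ with γ₀ = (c₁γ)/(c₂ C_{d,E}^m) and σ₀ = σ/(A_{d̃} A_d)^m, where 2^{m-1} < c₂/c₁ ≤ 2^m and A_d, A_{d̃} are doubling constants of μ for d- and d̃-balls. -/

import Mathlib

open MeasureTheory ENNReal Set

namespace WPA1

variable {X : Type*}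

/-- `d` is a quasi-distance on `X` with triangular constant `K`. -/
def QD (d : X → X → ℝ) (K : ℝ) : Prop :=
  1 ≤ K ∧ (∀ x y, 0 ≤ d x y) ∧ (∀ x y, d x y = 0 ↔ x = y) ∧
    (∀ x y, d x y = d y x) ∧ ∀ x y z, d x z ≤ K * (d x y + d y z)

/-- The `d`-ball of center `x` and radius `r`. -/
def ball (d : X → X → ℝ) (x : X) (r : ℝ) : Set X := {y | d x y < r}

/-- The optimal (least) triangular constant of `d`. -/
noncomputable def Kopt (d : X → X → ℝ) : ℝ := sInf {K | QD d K}

/-- Distance from a point to a set: `d(x,E) = inf_{e ∈ E} d(x,e)`. -/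
noncomputable def distE (d : X → X → ℝ) (E : Set X) (x : X) : ℝ :=
  sInf ((d x) '' E)

/-- The maximal `E`-free hole function
`ρ_{d,E}(B_d(x,r)) = sup {0 < s ≤ 2Kr : ∃ y, B_d(y,s) ⊆ B_d(x,r) \ E}`
(with value `0` when the set is empty, by `Real.sSup` conventions). -/
noncomputable def hole (d : X → X → ℝ) (K : ℝ) (E : Set X) (x : X) (r : ℝ) : ℝ :=
  sSup {s | 0 < s ∧ s ≤ 2 * K * r ∧ ∃ y, ball d y s ⊆ ball d x r \ E}

/-- The maximal hole function `ρ_{d,E}` is doubling with constant `C`. -/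
def HoleDoubling (d : X → X → ℝ) (K : ℝ) (E : Set X) (C : ℝ) : Prop :=
  ∀ x r, 0 < r → hole d K E x (2 * r) ≤ C * hole d K E x r

/-- The `d`-balls are open and form neighborhood bases: the ambient topology is
the one induced by the quasi-distance `d`. -/
def BallsBasis [TopologicalSpace X] (d : X → X → ℝ) : Prop :=
  (∀ x r, IsOpen (ball d x r)) ∧ ∀ x, ∀ U ∈ nhds x, ∃ r > 0, ball d x r ⊆ U

/-- The measure `μ` is doubling (with constant `A`) on `d`-balls, which have
positive finite measure; i.e. `(X,d,μ)` is a space of homogeneous type. -/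
def DoublingBalls [MeasurableSpace X] (μ : Measure X) (d : X → X → ℝ) (A : ℝ) : Prop :=
  ∀ x r, 0 < r → 0 < μ (ball d x r) ∧ μ (ball d x r) < ⊤ ∧
    μ (ball d x (2 * r)) ≤ ENNReal.ofReal A * μ (ball d x r)

/-- `E` is `(σ,γ)`-weakly porous with respect to `d` and `μ`. -/
def WeaklyPorousWith [MeasurableSpace X] (μ : Measure X) (d : X → X → ℝ) (K : ℝ)
    (E : Set X) (σ γ : ℝ) : Prop :=
  ∀ x r, 0 < r → ∃ (n : ℕ) (c : Fin n → X) (ρ : Fin n → ℝ),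
    (∀ i j, i ≠ j → Disjoint (ball d (c i) (ρ i)) (ball d (c j) (ρ j))) ∧
    (∀ i, ball d (c i) (ρ i) ⊆ ball d x r \ E) ∧
    (∀ i, γ * hole d K E x r ≤ ρ i) ∧
    (∀ i, ρ i ≤ 2 * K * r) ∧
    ENNReal.ofReal σ * μ (ball d x r) ≤ ∑ i, μ (ball d (c i) (ρ i))

/-- `E` is weakly porous with respect to `d` and `μ`. -/
def WeaklyPorous [MeasurableSpace X] (μ : Measure X) (d : X → X → ℝ) (K : ℝ)
    (E : Set X) : Prop :=
  ∃ σ γ : ℝ, σ ∈ Set.Ioo (0:ℝ) 1 ∧ γ ∈ Set.Ioo (0:ℝ) 1 ∧ WeaklyPorousWith μ d K E σ γ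

/-- The weight `d(·,E)^{-α}`, valued in `ℝ≥0∞` (so it is `∞` on `{d(·,E)=0}`). -/
noncomputable def wgt (d : X → X → ℝ) (E : Set X) (α : ℝ) (x : X) : ℝ≥0∞ :=
  ENNReal.ofReal (distE d E x) ^ (-α)

/-- `w` is an `A₁(X,d,μ)`-weight: `w` is locally integrable and the mean value of `w`
over every `d`-ball is bounded by a constant times its essential infimum there. -/
def MemA1 [MeasurableSpace X] (μ : Measure X) (d : X → X → ℝ) (w : X → ℝ≥0∞) : Prop :=
  (∀ x r, 0 < r → ∫⁻ y in ball d x r, w y ∂μ < ⊤) ∧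
  ∃ C : ℝ, 0 < C ∧ ∀ x r, 0 < r →
    ∫⁻ y in ball d x r, w y ∂μ ≤
      ENNReal.ofReal C * essInf w (μ.restrict (ball d x r)) * μ (ball d x r)



section Aux

variable {X : Type*}

lemma ball_mono (d : X → X → ℝ) (x : X) {r₁ r₂ : ℝ} (h : r₁ ≤ r₂) :
    ball d x r₁ ⊆ ball d x r₂ := fun _ hy => lt_of_lt_of_le hy h

lemma hole_nonneg (d : X → X → ℝ) (K : ℝ) (E : Set X) (x : X) (r : ℝ) :
    0 ≤ hole d K E x r :=
  Real.sSup_nonneg fun _ hs => hs.1.le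

lemma le_hole (d : X → X → ℝ) (K : ℝ) (E : Set X) (x : X) (r : ℝ) {s : ℝ}
    (h1 : 0 < s) (h2 : s ≤ 2 * K * r) (h3 : ∃ y, ball d y s ⊆ ball d x r \ E) :
    s ≤ hole d K E x r :=
  le_csSup ⟨2 * K * r, fun _ ht => ht.2.1⟩ ⟨h1, h2, h3⟩

lemma hole_le (d : X → X → ℝ) (K : ℝ) (E : Set X) (x : X) (r : ℝ) {b : ℝ} (hb : 0 ≤ b)
    (H : ∀ s, 0 < s → s ≤ 2 * K * r → (∃ y, ball d y s ⊆ ball d x r \ E) → s ≤ b) :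
    hole d K E x r ≤ b :=
  Real.sSup_le (fun s hs => H s hs.1 hs.2.1 hs.2.2) hb

lemma hole_mono (d : X → X → ℝ) {K : ℝ} (hK : 0 ≤ K) (E : Set X) (x : X) {r₁ r₂ : ℝ}
    (h : r₁ ≤ r₂) : hole d K E x r₁ ≤ hole d K E x r₂ := by
  refine hole_le _ _ _ _ _ (hole_nonneg d K E x r₂) fun s h1 h2 h3 => ?_
  refine le_hole _ _ _ _ _ h1 (h2.trans (by nlinarith)) ?_
  exact h3.imp fun y hy => hy.trans (Set.diff_subset_diff_left (ball_mono d x h))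

lemma hole_pos [MeasurableSpace X] {μ : Measure X} {d : X → X → ℝ} {K A : ℝ}
    {E : Set X} {σ γ : ℝ} (hd0 : ∀ x y, 0 ≤ d x y) (hA : DoublingBalls μ d A) (hσ : 0 < σ)
    (hwp : WeaklyPorousWith μ d K E σ γ) (x : X) {r : ℝ} (hr : 0 < r) :
    0 < hole d K E x r := by
  obtain ⟨n, c, ρ, hdisj, hsub, hlo, hhi, hmeas⟩ := hwp x r hr
  have hpos : 0 < ENNReal.ofReal σ * μ (ball d x r) :=
    ENNReal.mul_pos (by simp [ENNReal.ofReal_pos, hσ]) (hA x r hr).1.ne'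
  have hne : (∑ i, μ (ball d (c i) (ρ i))) ≠ 0 := fun h0 => by
    rw [h0] at hmeas
    exact absurd (le_antisymm hmeas zero_le) hpos.ne'
  obtain ⟨i, _, hi⟩ := Finset.exists_ne_zero_of_sum_ne_zero hne
  obtain ⟨z, hz⟩ := nonempty_of_measure_ne_zero hi
  have hρ : 0 < ρ i := lt_of_le_of_lt (hd0 (c i) z) hz
  exact lt_of_lt_of_le hρ (le_hole _ _ _ _ _ hρ (hhi i) ⟨c i, hsub i⟩)

lemma hole_pow {d : X → X → ℝ} {K C : ℝ} {E : Set X}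
    (hC : 0 ≤ C) (hdbl : HoleDoubling d K E C) (x : X) {R : ℝ} (hR : 0 < R) (j : ℕ) :
    hole d K E x (2 ^ j * R) ≤ C ^ j * hole d K E x R := by
  induction j with
  | zero => simp
  | succ j ih =>
      have h1 : (2:ℝ) ^ (j+1) * R = 2 * (2 ^ j * R) := by ring
      have h2 := hdbl x (2 ^ j * R) (by positivity)
      have h3 : C * hole d K E x (2 ^ j * R) ≤ C * (C ^ j * hole d K E x R) :=
        mul_le_mul_of_nonneg_left ih hC
      calc hole d K E x (2 ^ (j+1) * R) = hole d K E x (2 * (2 ^ j * R)) := by rw [h1]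
        _ ≤ C * hole d K E x (2 ^ j * R) := h2
        _ ≤ C * (C ^ j * hole d K E x R) := h3
        _ = C ^ (j+1) * hole d K E x R := by ring

lemma measure_ball_pow [MeasurableSpace X] {μ : Measure X} {d : X → X → ℝ}
    {A : ℝ} (hA : DoublingBalls μ d A) (hA0 : 0 ≤ A) (x : X) {R : ℝ} (hR : 0 < R) (j : ℕ) :
    μ (ball d x (2 ^ j * R)) ≤ ENNReal.ofReal (A ^ j) * μ (ball d x R) := by
  induction j with
  | zero => simp
  | succ j ih =>
      have h1 : (2:ℝ) ^ (j+1) * R = 2 * (2 ^ j * R) := by ring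
      calc μ (ball d x (2 ^ (j+1) * R)) = μ (ball d x (2 * (2 ^ j * R))) := by rw [h1]
        _ ≤ ENNReal.ofReal A * μ (ball d x (2 ^ j * R)) := (hA x _ (by positivity)).2.2
        _ ≤ ENNReal.ofReal A * (ENNReal.ofReal (A ^ j) * μ (ball d x R)) :=
            mul_le_mul_right ih _
        _ = ENNReal.ofReal (A ^ (j+1)) * μ (ball d x R) := by
            rw [← mul_assoc, ← ENNReal.ofReal_mul hA0, ← pow_succ']

lemma one_le_doubling [MeasurableSpace X] {μ : Measure X} {d : X → X → ℝ}
    {A : ℝ} (hA : DoublingBalls μ d A) (x : X) : 1 ≤ A := by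
  obtain ⟨h0, hfin, hdb⟩ := hA x 1 one_pos
  have hsub : ball d x 1 ⊆ ball d x (2 * 1) := ball_mono d x (by norm_num)
  have h1 : (1:ℝ≥0∞) * μ (ball d x 1) ≤ ENNReal.ofReal A * μ (ball d x 1) := by
    rw [one_mul]; exact (measure_mono hsub).trans hdb
  have h2 : (1:ℝ≥0∞) ≤ ENNReal.ofReal A :=
    (ENNReal.mul_le_mul_iff_left h0.ne' hfin.ne).mp h1
  exact ENNReal.one_le_ofReal.mp h2

end Aux

/-- If `E` is `(σ,γ)`-weakly porous w.r.t. `d` and `ρ_{d,E}` is doubling (constant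
`C_{d,E}`), then `E` is `(σ₀,γ₀)`-weakly porous w.r.t. an equivalent quasi-distance `d̃`,
with `γ₀ = c₁γ/(c₂ C_{d,E}^m)` and `σ₀ = σ/(A_{d̃} A_d)^m`, `2^{m-1} < c₂/c₁ ≤ 2^m`. -/
theorem statement8 {X : Type*} [TopologicalSpace X] [MeasurableSpace X] [BorelSpace X]
    (μ : Measure X) (d d' : X → X → ℝ) (K K' A A' C c₁ c₂ σ γ : ℝ)
    (hd : QD d K) (hd' : QD d' K')
    (hopen : ∀ x r, IsOpen (ball d x r)) (hopen' : ∀ x r, IsOpen (ball d' x r))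
    (hA : DoublingBalls μ d A) (hA' : DoublingBalls μ d' A')
    (hc₁ : 0 < c₁) (hc : c₁ ≤ c₂)
    (hlow : ∀ x y, c₁ * d x y ≤ d' x y) (hup : ∀ x y, d' x y ≤ c₂ * d x y)
    (E : Set X) (hE : E.Nonempty)
    (hσ : σ ∈ Set.Ioo (0:ℝ) 1) (hγ : γ ∈ Set.Ioo (0:ℝ) 1)
    (hwp : WeaklyPorousWith μ d K E σ γ)
    (hC : 0 < C) (hdbl : HoleDoubling d K E C)
    (m : ℕ) (hm1 : (2:ℝ) ^ ((m:ℤ) - 1) < c₂ / c₁) (hm2 : c₂ / c₁ ≤ (2:ℝ) ^ (m:ℤ)) :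
    WeaklyPorousWith μ d' K' E (σ / (A' * A) ^ m) (c₁ * γ / (c₂ * C ^ m)) := by
  obtain ⟨hK1, hd0, hdeq, hdsymm, hdtri⟩ := hd
  obtain ⟨hK'1, hd'0, hd'eq, hd'symm, hd'tri⟩ := hd'
  have hc₂ : 0 < c₂ := lt_of_lt_of_le hc₁ hc
  have h2m : c₂ ≤ 2 ^ m * c₁ := by
    rw [div_le_iff₀ hc₁] at hm2
    calc c₂ ≤ (2:ℝ) ^ (m:ℤ) * c₁ := hm2
      _ = 2 ^ m * c₁ := by rw [zpow_natCast]
  -- C ≥ 1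
  obtain ⟨e, he⟩ := hE
  have hC1 : 1 ≤ C := by
    have hp1 : 0 < hole d K E e 1 := hole_pos hd0 hA hσ.1 hwp e one_pos
    have hmn : hole d K E e 1 ≤ hole d K E e (2 * 1) :=
      hole_mono d (by linarith) E e (by norm_num)
    have hdb := hdbl e 1 one_pos
    nlinarith
  have hCm : (1:ℝ) ≤ C ^ m := one_le_pow₀ hC1
  have hA1 : 1 ≤ A := one_le_doubling hA e
  have hA'1 : 1 ≤ A' := one_le_doubling hA' e
  have hσ0 : 0 < σ := hσ.1
  have hγ0 : 0 < γ := hγ.1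
  -- γ₀ facts
  set γ₀ : ℝ := c₁ * γ / (c₂ * C ^ m) with hγ₀def
  have hγ₀pos : 0 < γ₀ := by rw [hγ₀def]; positivity
  have hγ₀lt1 : γ₀ < 1 := by
    rw [hγ₀def, div_lt_one (by positivity)]
    have e1 : c₁ * γ < c₁ := by nlinarith [hγ.2, hc₁]
    have e2 : c₂ ≤ c₂ * C ^ m := le_mul_of_one_le_right hc₂.le hCm
    linarith
  have hσ₀le1 : σ / (A' * A) ^ m ≤ 1 := by
    have h1 : (1:ℝ) ≤ (A' * A) ^ m := one_le_pow₀ (by nlinarith)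
    rw [div_le_one (by positivity)]
    linarith [hσ.2]
  intro x r hr
  set R : ℝ := r / c₂ with hRdef
  have hRpos : 0 < R := div_pos hr hc₂
  have hc₂R : c₂ * R = r := by rw [hRdef]; field_simp
  have hrle : r ≤ 2 ^ m * c₁ * R := by
    rw [← hc₂R]; exact mul_le_mul_of_nonneg_right h2m hRpos.le
  have hH'le : hole d' K' E x r ≤ 2 * K' * r :=
    hole_le _ _ _ _ _ (by nlinarith [hK'1, hr]) fun s h1 h2 _ => h2
  have hH'0 : 0 ≤ hole d' K' E x r := hole_nonneg _ _ _ _ _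
  -- subset facts
  have hsubB' : ball d x R ⊆ ball d' x r := by
    intro z hz
    have h1 : d' x z < c₂ * R := lt_of_le_of_lt (hup x z) ((mul_lt_mul_iff_right₀ hc₂).mpr hz)
    show d' x z < r
    rw [← hc₂R]; exact h1
  have hB'sub : ball d' x r ⊆ ball d x (2 ^ m * R) := fun z hz => by
    have h1 : c₁ * d x z ≤ d' x z := hlow x z
    have h2 : d' x z < r := hz
    have h3 : c₁ * d x z < c₁ * (2 ^ m * R) := by
      rw [show c₁ * (2 ^ m * R) = 2 ^ m * c₁ * R by ring]
      exact lt_of_le_of_lt h1 (lt_of_lt_of_le h2 hrle)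
    exact (mul_lt_mul_iff_right₀ hc₁).mp h3
  by_cases hcase : ∃ s, (0 < s ∧ s ≤ 2 * K' * r ∧ ∃ y, ball d' y s ⊆ ball d' x r \ E)
      ∧ 2 * K * (2 ^ m * r) < s
  · -- Case B : a huge hole exists; B_{d'}(x,r) is contained in a near-maximal hole.
    obtain ⟨s, hsmem, hsbig⟩ := hcase
    have hsle : s ≤ hole d' K' E x r := le_hole _ _ _ _ _ hsmem.1 hsmem.2.1 hsmem.2.2
    have hH'pos : 0 < hole d' K' E x r := lt_of_lt_of_le hsmem.1 hsle
    set τ : ℝ := max (γ₀ * hole d' K' E x r) (2 * K * (2 ^ m * r)) with hτdef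
    have hτlt : τ < hole d' K' E x r := by
      apply max_lt
      · nlinarith
      · exact lt_of_lt_of_le hsbig hsle
    have hτlt' : τ < sSup {s | 0 < s ∧ s ≤ 2 * K' * r ∧
        ∃ y, ball d' y s ⊆ ball d' x r \ E} := hτlt
    obtain ⟨s', hs'mem, hτs'⟩ := exists_lt_of_lt_csSup ⟨s, hsmem⟩ hτlt'
    obtain ⟨hs'0, hs'le, y', hy'⟩ := hs'mem
    refine ⟨1, fun _ => y', fun _ => s', ?_, fun _ => hy', ?_, fun _ => hs'le, ?_⟩
    · intro i j hij; exact absurd (Subsingleton.elim i j) hij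
    · intro _
      exact le_of_lt (lt_of_le_of_lt (le_max_left _ _) hτs')
    · -- measure: the single hole contains all of ball d' x r
      have hy'B : d' x y' < r := by
        have : y' ∈ ball d' y' s' := by
          show d' y' y' < s'
          rw [(hd'eq y' y').mpr rfl]; exact hs'0
        exact (hy' this).1
      have hsub2 : ball d' x r ⊆ ball d' y' s' := by
        intro z hz
        have hz' : d' x z < r := hz
        have hxy : d x y' < 2 ^ m * R := hB'sub hy'B
        have hxz : d x z < 2 ^ m * R := hB'sub hz
        have htri : d y' z ≤ K * (d y' x + d x z) := hdtri y' x z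
        have hsymm : d y' x = d x y' := hdsymm y' x
        have hKpos : (0:ℝ) < K := lt_of_lt_of_le one_pos hK1
        have e1 : d y' x + d x z < 2 ^ m * R + 2 ^ m * R := by
          rw [hsymm]; exact add_lt_add hxy hxz
        have hdy'z : d y' z < K * (2 ^ m * R + 2 ^ m * R) :=
          lt_of_le_of_lt htri ((mul_lt_mul_iff_right₀ hKpos).mpr e1)
        have e2 : c₂ * d y' z < c₂ * (K * (2 ^ m * R + 2 ^ m * R)) :=
          (mul_lt_mul_iff_right₀ hc₂).mpr hdy'z
        have e3 : c₂ * (K * (2 ^ m * R + 2 ^ m * R)) = 2 * K * (2 ^ m * r) := by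
          rw [← hc₂R]; ring
        have h3 : d' y' z < s' := by
          refine lt_of_le_of_lt (hup y' z) ?_
          calc c₂ * d y' z < 2 * K * (2 ^ m * r) := by rw [← e3]; exact e2
            _ ≤ τ := le_max_right _ _
            _ < s' := hτs'
        exact h3
      have hms : μ (ball d' x r) ≤ μ (ball d' y' s') := measure_mono hsub2
      have hof : ENNReal.ofReal (σ / (A' * A) ^ m) ≤ 1 := ENNReal.ofReal_le_one.mpr hσ₀le1
      calc ENNReal.ofReal (σ / (A' * A) ^ m) * μ (ball d' x r)
          ≤ 1 * μ (ball d' x r) := mul_le_mul_left hof _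
        _ = μ (ball d' x r) := one_mul _
        _ ≤ μ (ball d' y' s') := hms
        _ = ∑ _i : Fin 1, μ (ball d' y' s') := by rw [Fin.sum_univ_one]
  · -- Case A : all d'-holes are of size ≤ 2K·2^m·r
    push_neg at hcase
    have hHposR : 0 < hole d K E x R := hole_pos hd0 hA hσ.1 hwp x hRpos
    have hH'bound : hole d' K' E x r ≤ c₂ * (C ^ m * hole d K E x R) := by
      refine hole_le _ _ _ _ _ (mul_nonneg hc₂.le (mul_nonneg (by positivity)
        (hole_nonneg _ _ _ _ _))) fun s hs1 hs2 hy => ?_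
      obtain ⟨y, hy⟩ := hy
      have hst : s ≤ 2 * K * (2 ^ m * r) := hcase s ⟨hs1, hs2, ⟨y, hy⟩⟩
      have hkey : s / c₂ ≤ hole d K E x (2 ^ m * R) := by
        refine le_hole _ _ _ _ _ (div_pos hs1 hc₂) ?_ ⟨y, ?_⟩
        · rw [div_le_iff₀ hc₂]
          calc s ≤ 2 * K * (2 ^ m * r) := hst
            _ = 2 * K * (2 ^ m * R) * c₂ := by rw [← hc₂R]; ring
        · intro z hz
          have hz' : d y z < s / c₂ := hz
          have h1 : d' y z < s := by
            refine lt_of_le_of_lt (hup y z) ?_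
            rw [lt_div_iff₀ hc₂] at hz'
            rw [mul_comm]; exact hz'
          have h2 : z ∈ ball d' x r \ E := hy h1
          exact ⟨hB'sub h2.1, h2.2⟩
      have hpow : hole d K E x (2 ^ m * R) ≤ C ^ m * hole d K E x R :=
        hole_pow hC.le hdbl x hRpos m
      have hfin : s / c₂ ≤ C ^ m * hole d K E x R := hkey.trans hpow
      rw [div_le_iff₀ hc₂] at hfin
      calc s ≤ C ^ m * hole d K E x R * c₂ := hfin
        _ = c₂ * (C ^ m * hole d K E x R) := by ring
    obtain ⟨n, c, ρ, hdisj, hsub, hlo, hhi, hmeas⟩ := hwp x R hRpos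
    have hρpos : ∀ i, 0 < ρ i := fun i =>
      lt_of_lt_of_le (mul_pos hγ.1 hHposR) (hlo i)
    have hsubd : ∀ i, ball d' (c i) (c₁ * ρ i) ⊆ ball d (c i) (ρ i) := by
      intro i z hz
      have h1 : c₁ * d (c i) z ≤ d' (c i) z := hlow (c i) z
      have h2 : d' (c i) z < c₁ * ρ i := hz
      exact (mul_lt_mul_iff_right₀ hc₁).mp (lt_of_le_of_lt h1 h2)
    have hcB : ∀ i, d' x (c i) < r := by
      intro i
      have hci : c i ∈ ball d (c i) (ρ i) := by
        show d (c i) (c i) < ρ i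
        rw [(hdeq (c i) (c i)).mpr rfl]; exact hρpos i
      exact hsubB' (hsub i hci).1
    have hkeyeq : ∀ i, ball d' (c i) (min (c₁ * ρ i) (2 * K' * r))
        = ball d' (c i) (c₁ * ρ i) := by
      intro i
      apply Set.Subset.antisymm (ball_mono _ _ (min_le_left _ _))
      intro z hz
      have hz' : d' (c i) z < c₁ * ρ i := hz
      have hzB : z ∈ ball d x R := (hsub i (hsubd i hz)).1
      have hzB' : d' x z < r := hsubB' hzB
      have htri : d' (c i) z ≤ K' * (d' (c i) x + d' x z) := hd'tri (c i) x z
      have hsymm : d' (c i) x = d' x (c i) := hd'symm (c i) x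
      have hK'pos : (0:ℝ) < K' := lt_of_lt_of_le one_pos hK'1
      have h2 : d' (c i) z < 2 * K' * r := by
        rw [hsymm] at htri
        have e1 : d' x (c i) + d' x z < r + r := add_lt_add (hcB i) hzB'
        calc d' (c i) z ≤ K' * (d' x (c i) + d' x z) := htri
          _ < K' * (r + r) := (mul_lt_mul_iff_right₀ hK'pos).mpr e1
          _ = 2 * K' * r := by ring
      exact lt_min hz' h2
    refine ⟨n, c, fun i => min (c₁ * ρ i) (2 * K' * r), ?_, ?_, ?_, ?_, ?_⟩
    · intro i j hij
      exact (hdisj i j hij).mono ((hkeyeq i).subset.trans (hsubd i))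
        ((hkeyeq j).subset.trans (hsubd j))
    · intro i
      rw [hkeyeq i]
      exact ((hsubd i).trans (hsub i)).trans (Set.diff_subset_diff_left hsubB')
    · intro i
      apply le_min
      · have h1 : γ₀ * hole d' K' E x r ≤ γ₀ * (c₂ * (C ^ m * hole d K E x R)) :=
          mul_le_mul_of_nonneg_left hH'bound hγ₀pos.le
        have h2 : γ₀ * (c₂ * (C ^ m * hole d K E x R)) = c₁ * (γ * hole d K E x R) := by
          rw [hγ₀def]; field_simp
        have h3 : c₁ * (γ * hole d K E x R) ≤ c₁ * ρ i :=
          mul_le_mul_of_nonneg_left (hlo i) hc₁.le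
        calc γ₀ * hole d' K' E x r
            ≤ c₁ * (γ * hole d K E x R) := h1.trans_eq h2
          _ ≤ c₁ * ρ i := h3
      · have : γ₀ * hole d' K' E x r ≤ 1 * hole d' K' E x r :=
          mul_le_mul_of_nonneg_right hγ₀lt1.le hH'0
        calc γ₀ * hole d' K' E x r
            ≤ 1 * hole d' K' E x r := this
          _ = hole d' K' E x r := one_mul _
          _ ≤ 2 * K' * r := hH'le
    · intro i; exact min_le_right _ _
    · -- measure estimate
      have hsum : ∑ i, μ (ball d' (c i) (min (c₁ * ρ i) (2 * K' * r)))
          = ∑ i, μ (ball d' (c i) (c₁ * ρ i)) :=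
        Finset.sum_congr rfl fun i _ => by rw [hkeyeq i]
      rw [hsum]
      have hA0 : (0:ℝ) ≤ A := by linarith
      have hA'0 : (0:ℝ) ≤ A' := by linarith
      have step1 : μ (ball d' x r) ≤ μ (ball d x (2 ^ m * R)) := measure_mono hB'sub
      have step2 : μ (ball d x (2 ^ m * R)) ≤ ENNReal.ofReal (A ^ m) * μ (ball d x R) :=
        measure_ball_pow hA hA0 x hRpos m
      have step3 : ∀ i, μ (ball d (c i) (ρ i))
          ≤ ENNReal.ofReal (A' ^ m) * μ (ball d' (c i) (c₁ * ρ i)) := by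
        intro i
        have hsub3 : ball d (c i) (ρ i) ⊆ ball d' (c i) (2 ^ m * (c₁ * ρ i)) := by
          intro z hz
          have h1 : d' (c i) z ≤ c₂ * d (c i) z := hup (c i) z
          have h2 : d (c i) z < ρ i := hz
          have e1 : d' (c i) z < c₂ * ρ i :=
            lt_of_le_of_lt h1 ((mul_lt_mul_iff_right₀ hc₂).mpr h2)
          have e2 : c₂ * ρ i ≤ 2 ^ m * (c₁ * ρ i) := by
            rw [show (2:ℝ) ^ m * (c₁ * ρ i) = 2 ^ m * c₁ * ρ i by ring]
            exact mul_le_mul_of_nonneg_right h2m (hρpos i).le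
          exact lt_of_lt_of_le e1 e2
        exact (measure_mono hsub3).trans
          (measure_ball_pow hA' hA'0 (c i) (mul_pos hc₁ (hρpos i)) m)
      have step4 : ENNReal.ofReal σ * μ (ball d x R)
          ≤ ENNReal.ofReal (A' ^ m) * ∑ i, μ (ball d' (c i) (c₁ * ρ i)) := by
        calc ENNReal.ofReal σ * μ (ball d x R) ≤ ∑ i, μ (ball d (c i) (ρ i)) := hmeas
          _ ≤ ∑ i, ENNReal.ofReal (A' ^ m) * μ (ball d' (c i) (c₁ * ρ i)) :=
              Finset.sum_le_sum fun i _ => step3 i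
          _ = ENNReal.ofReal (A' ^ m) * ∑ i, μ (ball d' (c i) (c₁ * ρ i)) := by
              rw [Finset.mul_sum]
      have hne0 : ENNReal.ofReal (A' ^ m) ≠ 0 :=
        (ENNReal.ofReal_pos.mpr (show (0:ℝ) < A' ^ m by positivity)).ne'
      have hnetop : ENNReal.ofReal (A' ^ m) ≠ ⊤ := ENNReal.ofReal_ne_top
      rw [← ENNReal.mul_le_mul_iff_right hne0 hnetop]
      have heq1 : ENNReal.ofReal (A' ^ m) *
          (ENNReal.ofReal (σ / (A' * A) ^ m) * μ (ball d' x r))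
          = ENNReal.ofReal (σ / A ^ m) * μ (ball d' x r) := by
        rw [← mul_assoc, ← ENNReal.ofReal_mul (by positivity)]
        congr 2
        rw [mul_pow]
        field_simp
      have heq2 : ENNReal.ofReal (σ / A ^ m) * (ENNReal.ofReal (A ^ m) * μ (ball d x R))
          = ENNReal.ofReal σ * μ (ball d x R) := by
        rw [← mul_assoc, ← ENNReal.ofReal_mul (by positivity)]
        congr 2
        field_simp
      calc ENNReal.ofReal (A' ^ m) *
          (ENNReal.ofReal (σ / (A' * A) ^ m) * μ (ball d' x r))
          = ENNReal.ofReal (σ / A ^ m) * μ (ball d' x r) := heq1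
        _ ≤ ENNReal.ofReal (σ / A ^ m) * (ENNReal.ofReal (A ^ m) * μ (ball d x R)) :=
            mul_le_mul_right (step1.trans step2) _
        _ = ENNReal.ofReal σ * μ (ball d x R) := heq2
        _ ≤ ENNReal.ofReal (A' ^ m) * ∑ i, μ (ball d' (c i) (c₁ * ρ i)) := step4

end WPA1
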